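/- Let h = ⟨O, po, rf⟩ be a history, let V ⊆ WR be nonempty. Then T[V] = 1 if and only if there exists v ∈ V such that the two coherence graphs G_loc[V\{v}, v] and G_mm[V\{v}, v] are acyclic and T[V\{v}] = 1, where T[U] = 1 iff some snapshot order tw[U] makes G_loc(tw[U]) and G_mm(tw[U]) acyclic. -/

import Mathlib

/-- A relation (graph) is acyclic if its transitive closure is irreflexive. -/
def Acyc {α : Type*} (R : Set (α × α)) : Prop :=
  ∀ a, ¬ Relation.TransGen (fun x y => (x, y) ∈ R) a a

/-- `t` is a strict total order on the set `S`. -/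
def StrictTotalOn {α : Type*} (S : Set α) (t : Set (α × α)) : Prop :=
  (∀ p ∈ t, p.1 ∈ S ∧ p.2 ∈ S) ∧
  (∀ a, (a, a) ∉ t) ∧
  (∀ a b c, (a, b) ∈ t → (b, c) ∈ t → (a, c) ∈ t) ∧
  (∀ a ∈ S, ∀ b ∈ S, a ≠ b → (a, b) ∈ t ∨ (b, a) ∈ t)

/-- Composition `rf⁻¹ ∘ S`: `(r,w)` iff there is `w'` with `(w',r) ∈ rf` and `(w',w) ∈ S`. -/
def compRF {α : Type*} (rf S : Set (α × α)) : Set (α × α) :=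
  {p | ∃ w', (w', p.1) ∈ rf ∧ (w', p.2) ∈ S}

/-- Restriction of a relation to pairs of events on variable `x`. -/
def restrVar {α X : Type*} (var : α → X) (S : Set (α × α)) (x : X) : Set (α × α) :=
  {p ∈ S | var p.1 = x ∧ var p.2 = x}

/-- Union over all variables of the restrictions: the same-variable part of `S`. -/
def sameVar {α X : Type*} (var : α → X) (S : Set (α × α)) : Set (α × α) :=
  ⋃ x : X, restrVar var S x

/-- `po-loc`: restriction of `po` to events on the same variable. -/
def poloc {α X : Type*} (var : α → X) (po : Set (α × α)) : Set (α × α) :=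
  {p ∈ po | var p.1 = var p.2}

/-- A store order: a union over variables of strict total orders on the writes to
that variable, with no edges between distinct variables. -/
def IsStoreOrder {α X : Type*} (var : α → X) (Wr : Set α) (ww : Set (α × α)) : Prop :=
  (∀ p ∈ ww, var p.1 = var p.2) ∧
  ∀ x : X, StrictTotalOn {w ∈ Wr | var w = x} (restrVar var ww x)

/-- `r[S]`: every write outside `S` (within `Wr`) precedes every write in `S`. -/
def rSet {α : Type*} (Wr S : Set α) : Set (α × α) :=
  {p | p.1 ∈ Wr \ S ∧ p.2 ∈ S}

/-- The table entry `T[V] = 1`: some snapshot order on `V` makes both graphs acyclic. -/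
def TableEntry {α X : Type*} (var : α → X) (Wr : Set α)
    (po rf pomm rfmm : Set (α × α)) (V : Set α) : Prop :=
  ∃ t : Set (α × α), StrictTotalOn V t ∧
    Acyc (poloc var po ∪ rf ∪ (t ∪ rSet Wr V) ∪ compRF rf (sameVar var (t ∪ rSet Wr V))) ∧
    Acyc (pomm ∪ rfmm ∪ (t ∪ rSet Wr V) ∪ compRF rf (sameVar var (t ∪ rSet Wr V)))

/-- `r[V',v]`: the complement of `V' ∪ {v}` precedes `V' ∪ {v}` and `v` is minimal. -/
def rVv {α : Type*} (Wr V' : Set α) (v : α) : Set (α × α) :=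
  rSet Wr (V' ∪ {v}) ∪ {p : α × α | p.1 = v ∧ p.2 ∈ V'}

lemma acyc_mono {α : Type*} {R S : Set (α × α)} (h : R ⊆ S) (hS : Acyc S) : Acyc R :=
  fun a ha => hS a (Relation.TransGen.mono (fun x y hxy => h hxy) _ _ ha)

lemma mem_sameVar {α X : Type*} {var : α → X} {S : Set (α × α)} {p : α × α} :
    p ∈ sameVar var S ↔ p ∈ S ∧ var p.1 = var p.2 := by
  constructor
  · intro hp
    rw [sameVar, Set.mem_iUnion] at hp
    obtain ⟨x, hS, h1, h2⟩ := hp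
    exact ⟨hS, h1.trans h2.symm⟩
  · rintro ⟨hS, h⟩
    rw [sameVar, Set.mem_iUnion]
    exact ⟨var p.1, hS, rfl, h.symm⟩

lemma compRF_cases {α X : Type*} {var : α → X} {rf S A : Set (α × α)} (Q : α → Prop)
    (h : ∀ p ∈ S, p ∈ A ∨ Q p.2) :
    ∀ p ∈ compRF rf (sameVar var S), p ∈ compRF rf (sameVar var A) ∨ Q p.2 := by
  rintro ⟨r, u⟩ ⟨w', hw, hu⟩
  rw [mem_sameVar] at hu
  rcases h _ hu.1 with hA | hQ
  · exact Or.inl ⟨w', hw, mem_sameVar.mpr ⟨hA, hu.2⟩⟩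
  · exact Or.inr hQ

lemma compRF_mono' {α X : Type*} {var : α → X} {rf S T : Set (α × α)} (h : S ⊆ T) :
    compRF rf (sameVar var S) ⊆ compRF rf (sameVar var T) := fun p hp =>
  (compRF_cases (fun _ => False) (fun _ hq => Or.inl (h hq)) p hp).resolve_right id

lemma acyc_graph_mono {α X : Type*} {var : α → X} {rf : Set (α × α)} (B : Set (α × α))
    {S T : Set (α × α)} (h : S ⊆ T) :
    Acyc (B ∪ T ∪ compRF rf (sameVar var T)) → Acyc (B ∪ S ∪ compRF rf (sameVar var S)) :=
  acyc_mono (Set.union_subset_union (Set.union_subset_union (Set.Subset.refl B) h)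
    (compRF_mono' h))

lemma acyc_union {α : Type*} {H Gp Gv : Set (α × α)} {v : α} {V' : Set α} (hv : v ∉ V')
    (h1 : ∀ p ∈ H, p ∈ Gp ∨ p.2 = v)
    (h2 : ∀ p ∈ H, p ∈ Gv ∨ p.2 ∈ V')
    (h3 : ∀ b ∈ V', (v, b) ∈ Gv)
    (hGpH : Gp ⊆ H)
    (hGp : Acyc Gp) (hGv : Acyc Gv) : Acyc H := by
  have claimC : ∀ s, Relation.TransGen (fun x y => (x, y) ∈ H) s v →
      Relation.TransGen (fun x y => (x, y) ∈ Gv) s v ∨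
      ∃ b ∈ V', Relation.TransGen (fun x y => (x, y) ∈ Gv) b v := by
    intro s hs
    induction hs using Relation.TransGen.head_induction_on with
    | single h =>
      left
      exact Relation.TransGen.single ((h2 _ h).resolve_right fun hb => hv hb)
    | head h htg ih =>
      rcases ih with hc | hc
      · rcases h2 _ h with hGve | hV'
        · exact Or.inl (Relation.TransGen.head hGve hc)
        · exact Or.inr ⟨_, hV', hc⟩
      · exact Or.inr hc
  have claimE : ∀ x y, Relation.TransGen (fun x y => (x, y) ∈ H) x y →
      Relation.TransGen (fun x y => (x, y) ∈ Gp) x y ∨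
      (Relation.TransGen (fun x y => (x, y) ∈ H) x v ∧
       Relation.ReflTransGen (fun x y => (x, y) ∈ H) v y) := by
    intro x y hxy
    induction hxy with
    | single h =>
      rcases h1 _ h with hGpe | hv'
      · exact Or.inl (Relation.TransGen.single hGpe)
      · cases hv'
        exact Or.inr ⟨Relation.TransGen.single h, Relation.ReflTransGen.refl⟩
    | tail hxb e ih =>
      rcases ih with hGpp | ⟨hxv, hvb⟩
      · rcases h1 _ e with hGpe | hv'
        · exact Or.inl (hGpp.tail hGpe)
        · cases hv'
          exact Or.inr ⟨(Relation.TransGen.mono (fun a b hab => hGpH hab) _ _ hGpp).tail e,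
            Relation.ReflTransGen.refl⟩
      · exact Or.inr ⟨hxv, hvb.tail e⟩
  intro a ha
  rcases claimE a a ha with hc | ⟨hav, hva⟩
  · exact hGp a hc
  · have hvv : Relation.TransGen (fun x y => (x, y) ∈ H) v v :=
      Relation.TransGen.trans_right hva hav
    rcases claimC v hvv with hc | ⟨b, hb, hbv⟩
    · exact hGv v hc
    · exact hGv b (hbv.tail (h3 b hb))

theorem table_recursion {α X : Type*} [Fintype α]
    (var : α → X) (Wr : Set α) (po rf pomm rfmm : Set (α × α))
    (hpo_irr : ∀ a, (a, a) ∉ po)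
    (hpo_trans : ∀ a b c, (a, b) ∈ po → (b, c) ∈ po → (a, c) ∈ po)
    (hrf : ∀ p ∈ rf, p.1 ∈ Wr ∧ p.2 ∉ Wr ∧ var p.1 = var p.2)
    (hrf_uniq : ∀ r ∉ Wr, ∃! w, (w, r) ∈ rf)
    (hpomm : pomm ⊆ po) (hrfmm : rfmm ⊆ rf)
    (V : Set α) (hV : V ⊆ Wr) (hne : V.Nonempty) :
    TableEntry var Wr po rf pomm rfmm V ↔
    ∃ v ∈ V,
      Acyc (poloc var po ∪ rf ∪ rVv Wr (V \ {v}) v ∪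
        compRF rf (sameVar var (rVv Wr (V \ {v}) v))) ∧
      Acyc (pomm ∪ rfmm ∪ rVv Wr (V \ {v}) v ∪
        compRF rf (sameVar var (rVv Wr (V \ {v}) v))) ∧
      TableEntry var Wr po rf pomm rfmm (V \ {v}) := by
  classical
  constructor
  · rintro ⟨t, ⟨hmem, hirr, htrans, htotal⟩, hA1, hA2⟩
    -- a minimal element exists in any nonempty finite set
    have hminlem : ∀ s : Finset α, s.Nonempty → ∃ v ∈ s, ∀ u ∈ s, (u, v) ∉ t := by
      intro s
      induction s using Finset.induction_on with
      | empty => rintro ⟨x, hx⟩; simp at hx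
      | insert a s ha ih =>
        intro _
        by_cases hs : s.Nonempty
        · obtain ⟨w, hw, hwmin⟩ := ih hs
          by_cases haw : (a, w) ∈ t
          · refine ⟨a, Finset.mem_insert_self a s, ?_⟩
            intro u hu
            rcases Finset.mem_insert.mp hu with rfl | hu
            · exact hirr u
            · exact fun hut => hwmin u hu (htrans _ _ _ hut haw)
          · refine ⟨w, Finset.mem_insert_of_mem hw, ?_⟩
            intro u hu
            rcases Finset.mem_insert.mp hu with rfl | hu
            · exact haw
            · exact hwmin u hu
        · rw [Finset.not_nonempty_iff_eq_empty] at hs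
          subst hs
          refine ⟨a, Finset.mem_insert_self a _, ?_⟩
          intro u hu
          rcases Finset.mem_insert.mp hu with rfl | hu
          · exact hirr u
          · simp at hu
    obtain ⟨v, hvmem, hvmin⟩ := hminlem (Set.Finite.toFinset (Set.toFinite V))
      ⟨hne.choose, (Set.Finite.mem_toFinset _).mpr hne.choose_spec⟩
    rw [Set.Finite.mem_toFinset] at hvmem
    have hvmin' : ∀ u ∈ V, (u, v) ∉ t := fun u hu =>
      hvmin u ((Set.Finite.mem_toFinset _).mpr hu)
    have hvlt : ∀ u ∈ V, u ≠ v → (v, u) ∈ t := by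
      intro u hu hne'
      rcases htotal v hvmem u hu (fun h => hne' h.symm) with h | h
      · exact h
      · exact absurd h (hvmin' u hu)
    have hVeq : (V \ {v}) ∪ {v} = V :=
      Set.diff_union_of_subset (by simpa using hvmem)
    have hsub1 : rVv Wr (V \ {v}) v ⊆ t ∪ rSet Wr V := by
      rintro ⟨a, b⟩ (h | h)
      · right; rwa [rSet, hVeq] at h
      · obtain ⟨h1, hb⟩ := h
        simp only at h1
        subst h1
        exact Or.inl (hvlt b hb.1 (by simpa using hb.2))
    refine ⟨v, hvmem, ?_, ?_, ?_⟩
    · exact acyc_graph_mono (poloc var po ∪ rf) hsub1 hA1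
    · exact acyc_graph_mono (pomm ∪ rfmm) hsub1 hA2
    · refine ⟨{p ∈ t | p.1 ≠ v ∧ p.2 ≠ v}, ⟨?_, ?_, ?_, ?_⟩, ?_, ?_⟩
      · rintro ⟨a, b⟩ ⟨hab, h1, h2⟩
        exact ⟨⟨(hmem _ hab).1, by simpa using h1⟩, ⟨(hmem _ hab).2, by simpa using h2⟩⟩
      · intro a h
        exact hirr a h.1
      · rintro a b c ⟨h1, ha, _⟩ ⟨h2, _, hc⟩
        exact ⟨htrans _ _ _ h1 h2, ha, hc⟩
      · intro a ha b hb hab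
        rcases htotal a ha.1 b hb.1 hab with h | h
        · exact Or.inl ⟨h, by simpa using ha.2, by simpa using hb.2⟩
        · exact Or.inr ⟨h, by simpa using hb.2, by simpa using ha.2⟩
      · refine acyc_graph_mono (poloc var po ∪ rf) ?_ hA1
        rintro ⟨a, b⟩ (h | h)
        · exact Or.inl h.1
        · by_cases hav : a = v
          · subst hav
            exact Or.inl (hvlt b h.2.1 (by simpa using h.2.2))
          · exact Or.inr ⟨⟨h.1.1, fun haV => h.1.2 ⟨haV, by simpa using hav⟩⟩, h.2.1⟩
      · refine acyc_graph_mono (pomm ∪ rfmm) ?_ hA2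
        rintro ⟨a, b⟩ (h | h)
        · exact Or.inl h.1
        · by_cases hav : a = v
          · subst hav
            exact Or.inl (hvlt b h.2.1 (by simpa using h.2.2))
          · exact Or.inr ⟨⟨h.1.1, fun haV => h.1.2 ⟨haV, by simpa using hav⟩⟩, h.2.1⟩
  · rintro ⟨v, hv, hAloc, hAmm, t', ⟨hmem', hirr', htrans', htotal'⟩, hB1, hB2⟩
    have hvWr : v ∈ Wr := hV hv
    have hvV' : v ∉ V \ {v} := fun h => h.2 rfl
    have hVeq : (V \ {v}) ∪ {v} = V :=
      Set.diff_union_of_subset (by simpa using hv)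
    set tb : Set (α × α) := t' ∪ {p : α × α | p.1 = v ∧ p.2 ∈ V \ {v}} with htb
    -- key case analyses for edges of the big snapshot relation
    have hS'sub : t' ∪ rSet Wr (V \ {v}) ⊆ tb ∪ rSet Wr V := by
      rintro ⟨a, b⟩ (h | h)
      · exact Or.inl (Or.inl h)
      · by_cases hav : a = v
        · subst hav
          exact Or.inl (Or.inr ⟨rfl, h.2⟩)
        · refine Or.inr ⟨⟨h.1.1, fun haV => h.1.2 ⟨haV, by simpa using hav⟩⟩, h.2.1⟩
    have hBcase : ∀ p ∈ tb ∪ rSet Wr V, p ∈ t' ∪ rSet Wr (V \ {v}) ∨ p.2 = v := by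
      rintro ⟨a, b⟩ (h | h)
      · rcases h with h | h
        · exact Or.inl (Or.inl h)
        · obtain ⟨h1, hb⟩ := h
          simp only at h1
          subst h1
          exact Or.inl (Or.inr ⟨⟨hvWr, hvV'⟩, hb⟩)
      · by_cases hbv : b = v
        · exact Or.inr hbv
        · exact Or.inl (Or.inr ⟨⟨h.1.1, fun hm => h.1.2 hm.1⟩, h.2, by simpa using hbv⟩)
    have hCcase : ∀ p ∈ tb ∪ rSet Wr V,
        p ∈ rVv Wr (V \ {v}) v ∨ p.2 ∈ V \ {v} := by
      rintro ⟨a, b⟩ (h | h)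
      · rcases h with h | h
        · exact Or.inr (hmem' _ h).2
        · exact Or.inl (Or.inr h)
      · left; left
        rwa [rSet, hVeq]
    -- the generic flavor lemma
    have hflavor : ∀ B : Set (α × α),
        Acyc (B ∪ rVv Wr (V \ {v}) v ∪ compRF rf (sameVar var (rVv Wr (V \ {v}) v))) →
        Acyc (B ∪ (t' ∪ rSet Wr (V \ {v})) ∪
          compRF rf (sameVar var (t' ∪ rSet Wr (V \ {v})))) →
        Acyc (B ∪ (tb ∪ rSet Wr V) ∪ compRF rf (sameVar var (tb ∪ rSet Wr V))) := by
      intro B hGv hGp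
      refine acyc_union (v := v) (V' := V \ {v}) hvV' ?_ ?_ ?_ ?_ hGp hGv
      · rintro p ((hb | hs) | hc)
        · exact Or.inl (Or.inl (Or.inl hb))
        · rcases hBcase p hs with h | h
          · exact Or.inl (Or.inl (Or.inr h))
          · exact Or.inr h
        · rcases compRF_cases (fun u => u = v) hBcase p hc with h | h
          · exact Or.inl (Or.inr h)
          · exact Or.inr h
      · rintro p ((hb | hs) | hc)
        · exact Or.inl (Or.inl (Or.inl hb))
        · rcases hCcase p hs with h | h
          · exact Or.inl (Or.inl (Or.inr h))
          · exact Or.inr h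
        · rcases compRF_cases (fun u => u ∈ V \ {v}) hCcase p hc with h | h
          · exact Or.inl (Or.inr h)
          · exact Or.inr h
      · intro b hb
        exact Or.inl (Or.inr (Or.inr ⟨rfl, hb⟩))
      · exact Set.union_subset_union (Set.union_subset_union (Set.Subset.refl B) hS'sub)
          (compRF_mono' hS'sub)
    refine ⟨tb, ⟨?_, ?_, ?_, ?_⟩, hflavor _ hAloc hB1, hflavor _ hAmm hB2⟩
    · rintro ⟨a, b⟩ (h | h)
      · exact ⟨(hmem' _ h).1.1, (hmem' _ h).2.1⟩
      · obtain ⟨h1, hb⟩ := h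
        simp only at h1
        subst h1
        exact ⟨hv, hb.1⟩
    · rintro a (h | h)
      · exact hirr' a h
      · exact h.2.2 (by simpa using h.1)
    · rintro a b c (h1 | h1) (h2 | h2)
      · exact Or.inl (htrans' _ _ _ h1 h2)
      · exact absurd (by simpa using h2.1) (by simpa using (hmem' _ h1).2.2 :)
      · exact Or.inr ⟨h1.1, (hmem' _ h2).2⟩
      · exact absurd (by simpa using h2.1) (by simpa using h1.2.2 :)
    · intro a ha b hb hab
      by_cases hav : a = v
      · subst hav
        exact Or.inl (Or.inr ⟨rfl, hb, by simpa using fun h => hab h.symm⟩)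
      · by_cases hbv : b = v
        · subst hbv
          exact Or.inr (Or.inr ⟨rfl, ha, by simpa using hav⟩)
        · rcases htotal' a ⟨ha, by simpa using hav⟩ b ⟨hb, by simpa using hbv⟩ hab with h | h
          · exact Or.inl (Or.inl h)
          · exact Or.inr (Or.inl h)
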